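/- Let a, b, e be vectors in a complex inner product space H with ‖e‖ = 1, let β ≥ 0, and let r ≥ 1 be a real number. Then |⟨a,e⟩·⟨e,b⟩|^{2r} ≤ (1/4)·( ((2β+1)/(β+1))·‖a‖^{2r}‖b‖^{2r} + ((2β+3)/(β+1))·‖a‖^{r}‖b‖^{r}·|⟨a,b⟩|^{r} ), where all powers are real powers of nonnegative real numbers. -/

import Mathlib

open scoped ComplexConjugate

lemma sq_rpow_aux (x : ℝ) (hx : 0 ≤ x) (r : ℝ) : (x ^ 2) ^ r = x ^ (2 * r) := by
  rw [← Real.rpow_natCast x 2, ← Real.rpow_mul hx]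
  norm_num

/-- Buzano's inequality. -/
lemma buzano_aux {H : Type*} [NormedAddCommGroup H] [InnerProductSpace ℂ H]
    (a b e : H) (he : ‖e‖ = 1) :
    ‖(inner ℂ a e : ℂ) * (inner ℂ e b : ℂ)‖ ≤ (‖a‖ * ‖b‖ + ‖(inner ℂ a b : ℂ)‖) / 2 := by
  set u : H := ((2 : ℂ) * (inner ℂ e a : ℂ)) • e - a with hu
  have hnorm : ‖u‖ = ‖a‖ := by
    have h1 : ‖u‖ ^ 2 = ‖a‖ ^ 2 := by
      rw [hu, @norm_sub_sq ℂ, inner_smul_left, norm_smul, he, mul_one]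
      have hc : (starRingEnd ℂ) (2 * (inner ℂ e a : ℂ)) * inner ℂ e a =
          2 * ((‖(inner ℂ e a : ℂ)‖ : ℂ)) ^ 2 := by
        rw [map_mul, mul_assoc, RCLike.conj_mul]
        congr 1
        exact map_ofNat _ 2
      rw [hc]
      have h2 : ‖(2 : ℂ) * (inner ℂ e a : ℂ)‖ = 2 * ‖(inner ℂ e a : ℂ)‖ := by
        rw [norm_mul]; norm_num
      have h3 : RCLike.re ((2 : ℂ) * ((‖(inner ℂ e a : ℂ)‖ : ℂ)) ^ 2) =
          2 * ‖(inner ℂ e a : ℂ)‖ ^ 2 := by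
        norm_cast
      rw [h2, h3]
      ring
    nlinarith [norm_nonneg u, norm_nonneg a]
  have hub : (inner ℂ u b : ℂ) = 2 * (inner ℂ a e : ℂ) * (inner ℂ e b : ℂ) - inner ℂ a b := by
    rw [hu, inner_sub_left, inner_smul_left, map_mul, inner_conj_symm]
    have : (starRingEnd ℂ) (2 : ℂ) = 2 := map_ofNat _ 2
    rw [this]
  have hCS : ‖(inner ℂ u b : ℂ)‖ ≤ ‖a‖ * ‖b‖ := by
    rw [← hnorm]; exact norm_inner_le_norm u b
  have htri : ‖2 * (inner ℂ a e : ℂ) * (inner ℂ e b : ℂ)‖ ≤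
      ‖(inner ℂ u b : ℂ)‖ + ‖(inner ℂ a b : ℂ)‖ := by
    rw [hub]
    calc ‖2 * (inner ℂ a e : ℂ) * (inner ℂ e b : ℂ)‖
        = ‖(2 * (inner ℂ a e : ℂ) * inner ℂ e b - inner ℂ a b) + inner ℂ a b‖ := by ring_nf
      _ ≤ _ := norm_add_le _ _
  have h2 : ‖2 * (inner ℂ a e : ℂ) * (inner ℂ e b : ℂ)‖ =
      2 * ‖(inner ℂ a e : ℂ) * (inner ℂ e b : ℂ)‖ := by
    rw [mul_assoc, norm_mul]; norm_num
  linarith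

lemma beta_combine (β X Y : ℝ) (hβ : 0 ≤ β) (hYX : Y ≤ X) :
    1/4 * X + 3/4 * Y ≤ 1/4 * ((2*β+1)/(β+1) * X + (2*β+3)/(β+1) * Y) := by
  have hd : (0:ℝ) < β + 1 := by linarith
  have hdiff : 1/4 * ((2*β+1)/(β+1) * X + (2*β+3)/(β+1) * Y)
      - (1/4 * X + 3/4 * Y) = β / (4*(β+1)) * (X - Y) := by
    field_simp
    ring
  nlinarith [mul_nonneg (div_nonneg hβ (by linarith : (0:ℝ) ≤ 4*(β+1))) (sub_nonneg.2 hYX)]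

/-- Buzano-type inequality with real power `r ≥ 1` and parameter `β ≥ 0`.
All powers are real powers (`Real.rpow`) of nonnegative real numbers. -/
theorem buzano_beta_rpow {H : Type*} [NormedAddCommGroup H] [InnerProductSpace ℂ H]
    (a b e : H) (he : ‖e‖ = 1) (β : ℝ) (hβ : 0 ≤ β) (r : ℝ) (hr : 1 ≤ r) :
    ‖(inner ℂ a e : ℂ) * (inner ℂ e b : ℂ)‖ ^ (2 * r) ≤
      1 / 4 * ((2 * β + 1) / (β + 1) * (‖a‖ ^ (2 * r) * ‖b‖ ^ (2 * r))
        + (2 * β + 3) / (β + 1) * (‖a‖ ^ r * ‖b‖ ^ r * ‖(inner ℂ a b : ℂ)‖ ^ r)) := by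
  set x := ‖(inner ℂ a e : ℂ) * (inner ℂ e b : ℂ)‖ with hx
  set B := ‖a‖ * ‖b‖ with hB
  set C := ‖(inner ℂ a b : ℂ)‖ with hC
  have hx0 : 0 ≤ x := norm_nonneg _
  have ha0 : 0 ≤ ‖a‖ := norm_nonneg _
  have hb0 : 0 ≤ ‖b‖ := norm_nonneg _
  have hB0 : 0 ≤ B := mul_nonneg ha0 hb0
  have hC0 : 0 ≤ C := norm_nonneg _
  have hCB : C ≤ B := norm_inner_le_norm a b
  have hbuz : x ≤ (B + C) / 2 := buzano_aux a b e he
  have hr0 : (0:ℝ) < r := lt_of_lt_of_le one_pos hr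
  have hmid0 : (0:ℝ) ≤ (B + C) / 2 := by positivity
  have step1 : x ^ (2 * r) ≤ ((B + C) / 2) ^ (2 * r) :=
    Real.rpow_le_rpow hx0 hbuz (by positivity)
  have step2 : ((B + C) / 2) ^ (2 * r) = (((B + C) / 2) ^ 2) ^ r := by
    rw [sq_rpow_aux _ hmid0]
  have hquad : ((B + C) / 2) ^ 2 ≤ (1/4) * B^2 + (3/4) * (B * C) := by nlinarith
  have step3 : (((B + C) / 2) ^ 2) ^ r ≤ ((1/4) * B^2 + (3/4) * (B * C)) ^ r :=
    Real.rpow_le_rpow (by positivity) hquad hr0.le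
  have step4 : ((1/4) * B^2 + (3/4) * (B * C)) ^ r ≤
      (1/4) * (B^2) ^ r + (3/4) * (B * C) ^ r := by
    have := NNReal.rpow_arith_mean_le_arith_mean2_rpow (1/4) (3/4)
      (⟨B^2, by positivity⟩) (⟨B*C, by positivity⟩)
      (by rw [← NNReal.coe_inj]; push_cast; norm_num) hr
    have h' := NNReal.coe_le_coe.2 this
    push_cast at h'
    convert h' using 2 <;> rfl
  have hX : (B^2) ^ r = ‖a‖ ^ (2*r) * ‖b‖ ^ (2*r) := by
    rw [hB, mul_pow, Real.mul_rpow (by positivity) (by positivity),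
      sq_rpow_aux _ ha0, sq_rpow_aux _ hb0]
  have hBr : B ^ r = ‖a‖ ^ r * ‖b‖ ^ r := Real.mul_rpow ha0 hb0
  have hY : (B * C) ^ r = ‖a‖ ^ r * ‖b‖ ^ r * C ^ r := by
    rw [Real.mul_rpow hB0 hC0, hBr]
  have hYX : (B * C) ^ r ≤ (B^2) ^ r :=
    Real.rpow_le_rpow (by positivity) (by nlinarith) hr0.le
  have hfin : 1/4 * (B^2)^r + 3/4 * (B*C)^r ≤
      1/4 * ((2*β+1)/(β+1) * (B^2)^r + (2*β+3)/(β+1) * (B*C)^r) :=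
    beta_combine β _ _ hβ hYX
  calc x ^ (2*r) ≤ (((B + C) / 2) ^ 2) ^ r := step2 ▸ step1
    _ ≤ ((1/4) * B^2 + (3/4) * (B * C)) ^ r := step3
    _ ≤ (1/4) * (B^2) ^ r + (3/4) * (B * C) ^ r := step4
    _ ≤ 1/4 * ((2*β+1)/(β+1) * (B^2)^r + (2*β+3)/(β+1) * (B*C)^r) := hfin
    _ = _ := by rw [hX, hY]
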